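/- Let f be a monic complex polynomial of degree n ≥ 2 with distinct roots λ_1, ..., λ_k, let z_{n-1} be the unique root of f^{(n-1)}, let z_{n-2} be any root of the quadratic polynomial f^{(n-2)}, and let g = f' / gcd(f, f'). Then the sum of the squares of the roots of g counted with multiplicity equals Σ_{j=1}^{k} λ_j^2 - 2(n-1)(z_{n-1} - z_{n-2})^2 - z_{n-1}^2. -/

import Mathlib

open Polynomial Multiset

lemma aux_esymm_one (s : Multiset ℂ) : s.esymm 1 = s.sum := by
  simp [Multiset.esymm, Multiset.powersetCard_one, Multiset.map_map]

lemma aux_esymm_two_cons (a : ℂ) (s : Multiset ℂ) :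
    (a ::ₘ s).esymm 2 = s.esymm 2 + a * s.sum := by
  rw [Multiset.esymm, show (2:ℕ) = 1 + 1 from rfl, Multiset.powersetCard_cons,
    Multiset.map_add, Multiset.sum_add]
  congr 1
  rw [Multiset.map_map, Multiset.powersetCard_one, Multiset.map_map]
  simp only [Function.comp_apply, Multiset.prod_cons, Multiset.prod_singleton]
  simpa using Multiset.sum_map_mul_left (s := s) (a := a) (f := fun x => x)

lemma aux_sum_sq (s : Multiset ℂ) :
    (s.map fun x => x ^ 2).sum = s.sum ^ 2 - 2 * s.esymm 2 := by
  induction s using Multiset.induction_on with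
  | empty => simp [Multiset.esymm, Multiset.powersetCard_zero_right]
  | cons a s ih =>
      rw [Multiset.map_cons, Multiset.sum_cons, ih, aux_esymm_two_cons, Multiset.sum_cons]
      ring

lemma aux_sum_roots (p : Polynomial ℂ) (hp : p.Monic) (d : ℕ) (hd : p.natDegree = d)
    (h1 : 1 ≤ d) : p.roots.sum = - p.coeff (d - 1) := by
  have hs : p.Splits := IsAlgClosed.splits p
  have := Polynomial.coeff_eq_esymm_roots_of_splits hs (k := d - 1) (by omega : d - 1 ≤ p.natDegree)
  rw [hp.leadingCoeff, hd] at this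
  have h2 : d - (d - 1) = 1 := by omega
  rw [h2] at this
  simp only [Multiset.esymm, Multiset.powersetCard_one, Multiset.map_map] at this
  simp at this ⊢
  rw [this]
  ring

lemma aux_esymm_roots (p : Polynomial ℂ) (hp : p.Monic) (d : ℕ) (hd : p.natDegree = d)
    (h2 : 2 ≤ d) : p.roots.esymm 2 = p.coeff (d - 2) := by
  have hs : p.Splits := IsAlgClosed.splits p
  have := Polynomial.coeff_eq_esymm_roots_of_splits hs (k := d - 2) (by omega : d - 2 ≤ p.natDegree)
  rw [hp.leadingCoeff, hd] at this
  have h3 : d - (d - 2) = 2 := by omega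
  rw [h3] at this
  simp at this
  rw [this]

lemma aux_roots_gcd (f : Polynomial ℂ) (hf0 : f ≠ 0) (hf'0 : derivative f ≠ 0) :
    (EuclideanDomain.gcd f (derivative f)).roots = f.roots - f.roots.dedup := by
  classical
  set d := EuclideanDomain.gcd f (derivative f) with hdgcd
  have hd0 : d ≠ 0 := fun h => hf0 (EuclideanDomain.gcd_eq_zero_iff.mp h).1
  have hdf : d ∣ f := EuclideanDomain.gcd_dvd_left _ _
  have hdf' : d ∣ derivative f := EuclideanDomain.gcd_dvd_right _ _
  ext t
  rw [Multiset.count_sub, count_roots, count_roots, Multiset.count_dedup]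
  by_cases ht : f.IsRoot t
  · have hm : 0 < f.rootMultiplicity t := (rootMultiplicity_pos hf0).2 ht
    have htm : t ∈ f.roots := by rw [mem_roots hf0]; exact ht
    simp only [htm, if_pos]
    have h1 : (derivative f).rootMultiplicity t = f.rootMultiplicity t - 1 := by
      apply derivative_rootMultiplicity_of_root_of_mem_nonZeroDivisors ht
      exact mem_nonZeroDivisors_of_ne_zero (by exact_mod_cast hm.ne')
    have hub : d.rootMultiplicity t ≤ f.rootMultiplicity t - 1 := by
      have := roots.le_of_dvd hf'0 hdf'
      have hc := Multiset.count_le_of_le t this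
      rwa [count_roots, count_roots, h1] at hc
    have hlb : f.rootMultiplicity t - 1 ≤ d.rootMultiplicity t := by
      rw [Polynomial.le_rootMultiplicity_iff hd0]
      apply EuclideanDomain.dvd_gcd
      · exact (pow_dvd_pow _ (Nat.sub_le _ _)).trans (f.pow_rootMultiplicity_dvd t)
      · have := (derivative f).pow_rootMultiplicity_dvd t
        rwa [h1] at this
    omega
  · have htm : t ∉ f.roots := by
      rw [mem_roots hf0]; exact ht
    simp only [htm, if_neg, not_false_iff]
    have := roots.le_of_dvd hf0 hdf
    have hc := Multiset.count_le_of_le t this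
    rw [count_roots, count_roots] at hc
    have h0 : f.rootMultiplicity t = 0 := by
      rw [rootMultiplicity_eq_zero_iff]; intro h; exact absurd h ht
    omega

theorem stmt16 (n : ℕ) (hn : 2 ≤ n) (f : Polynomial ℂ) (hf : f.Monic)
    (hdeg : f.natDegree = n) (z₁ z₂ : ℂ)
    (hz₁ : (Polynomial.derivative^[n - 1] f).eval z₁ = 0)
    (hz₂ : (Polynomial.derivative^[n - 2] f).eval z₂ = 0) :
    (((Polynomial.derivative f / EuclideanDomain.gcd f (Polynomial.derivative f)).roots).map
        (fun x => x ^ 2)).sum =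
      ∑ x ∈ f.roots.toFinset, x ^ 2 - 2 * ((n : ℂ) - 1) * (z₁ - z₂) ^ 2 - z₁ ^ 2 := by
  classical
  have hf0 : f ≠ 0 := hf.ne_zero
  have hN : (n : ℂ) ≠ 0 := Nat.cast_ne_zero.mpr (by omega)
  set a := f.coeff (n - 1) with ha
  set b := f.coeff (n - 2) with hb
  have hcoeffn : f.coeff n = 1 := by
    have := hf.coeff_natDegree; rwa [hdeg] at this
  -- the two scalar equations
  have eq1 : a + (n : ℂ) * z₁ = 0 := by
    have hlt : (Polynomial.derivative^[n-1] f).natDegree < 2 := by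
      have := natDegree_iterate_derivative f (n-1)
      omega
    rw [eval_eq_sum_range' hlt] at hz₁
    rw [Finset.sum_range_succ, Finset.sum_range_succ, Finset.sum_range_zero] at hz₁
    rw [coeff_iterate_derivative, coeff_iterate_derivative] at hz₁
    have e0 : 0 + (n-1) = n - 1 := by omega
    have e1 : 1 + (n-1) = n := by omega
    rw [e0, e1, hcoeffn, ← ha] at hz₁
    rw [Nat.descFactorial_self, Nat.descFactorial_eq_factorial_mul_choose] at hz₁
    have hch : n.choose (n-1) = n := by
      have : n.choose (n - 1) = n.choose 1 := by
        conv_lhs => rw [show n - 1 = n - 1 from rfl]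
        exact Nat.choose_symm (by omega)
      rw [this, Nat.choose_one_right]
    rw [hch] at hz₁
    have hfac : (((n-1).factorial : ℕ) : ℂ) ≠ 0 := Nat.cast_ne_zero.mpr (Nat.factorial_ne_zero _)
    have key : (((n-1).factorial : ℕ) : ℂ) * (a + (n:ℂ) * z₁) = 0 := by
      simp only [nsmul_eq_mul, Nat.cast_mul, pow_zero, pow_one, mul_one, zero_add] at hz₁
      linear_combination hz₁
    have := mul_eq_zero.mp key
    tauto
  have hc1 : ((n-1 : ℕ) : ℂ) = (n:ℂ) - 1 := by
    rw [Nat.cast_sub (by omega)]; norm_num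
  have hc2 : ((n-2 : ℕ) : ℂ) = (n:ℂ) - 2 := by
    rw [Nat.cast_sub (by omega)]; norm_num
  have eq2 : 2*b + 2*((n:ℂ)-1)*a*z₂ + (n:ℂ)*((n:ℂ)-1)*z₂^2 = 0 := by
    have hlt : (Polynomial.derivative^[n-2] f).natDegree < 3 := by
      have := natDegree_iterate_derivative f (n-2)
      omega
    rw [eval_eq_sum_range' hlt] at hz₂
    rw [Finset.sum_range_succ, Finset.sum_range_succ, Finset.sum_range_succ,
      Finset.sum_range_zero] at hz₂
    rw [coeff_iterate_derivative, coeff_iterate_derivative, coeff_iterate_derivative] at hz₂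
    have e0 : 0 + (n-2) = n - 2 := by omega
    have e1 : 1 + (n-2) = n - 1 := by omega
    have e2 : 2 + (n-2) = n := by omega
    rw [e0, e1, e2, hcoeffn, ← ha, ← hb] at hz₂
    rw [Nat.descFactorial_self, Nat.descFactorial_eq_factorial_mul_choose,
      Nat.descFactorial_eq_factorial_mul_choose] at hz₂
    have hch1 : (n-1).choose (n-2) = n - 1 := by
      have h' : (n-1) - 1 = n - 2 := by omega
      rw [← h', Nat.choose_symm (by omega), Nat.choose_one_right]
    have hch2 : n.choose (n-2) = n.choose 2 := by
      rw [show n - 2 = n - 2 from rfl, Nat.choose_symm (by omega)]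
    have h2ch : 2 * n.choose 2 = n * (n-1) := by
      rw [Nat.choose_two_right]
      refine Nat.mul_div_cancel' ?_
      have : Even ((n-1) * (n - 1 + 1)) := Nat.even_mul_succ_self (n-1)
      rw [show n - 1 + 1 = n by omega, mul_comm] at this
      exact this.two_dvd
    rw [hch1, hch2] at hz₂
    have hfac : (((n-2).factorial : ℕ) : ℂ) ≠ 0 := Nat.cast_ne_zero.mpr (Nat.factorial_ne_zero _)
    have key : (((n-2).factorial : ℕ) : ℂ) *
        (2*b + 2*((n:ℂ)-1)*a*z₂ + (n:ℂ)*((n:ℂ)-1)*z₂^2) = 0 := by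
      simp only [nsmul_eq_mul, Nat.cast_mul, pow_zero, pow_one, mul_one, zero_add] at hz₂
      have hcast : (2:ℂ) * ((n.choose 2 : ℕ) : ℂ) = (n:ℂ) * ((n:ℂ) - 1) := by
        have : ((2 * n.choose 2 : ℕ) : ℂ) = ((n * (n-1) : ℕ) : ℂ) := by rw [h2ch]
        push_cast [hc1] at this
        linear_combination this
      rw [hc1] at hz₂
      linear_combination 2 * hz₂ - (((n-2).factorial : ℕ) : ℂ) * z₂^2 * hcast
    have := mul_eq_zero.mp key
    tauto
  -- derivative degree and leading coeff
  have hf'top : (derivative f).coeff (n-1) = (n:ℂ) := by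
    rw [coeff_derivative, show n - 1 + 1 = n by omega, hcoeffn, one_mul, hc1]
    ring
  have hf'0 : derivative f ≠ 0 := by
    intro hq
    rw [hq, coeff_zero] at hf'top
    exact hN hf'top.symm
  have hdegf' : (derivative f).natDegree = n - 1 := by
    have hle : (derivative f).natDegree ≤ n - 1 := by
      have := natDegree_derivative_le f; omega
    have hge : n - 1 ≤ (derivative f).natDegree :=
      le_natDegree_of_ne_zero (by rw [hf'top]; exact hN)
    omega
  set h := C ((n:ℂ)⁻¹) * derivative f with hh
  have hinv : ((n:ℂ)⁻¹ : ℂ) ≠ 0 := inv_ne_zero hN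
  have hdegh : h.natDegree = n - 1 := by rw [hh, natDegree_C_mul hinv, hdegf']
  have hmonic : h.Monic := by
    rw [Monic, leadingCoeff, hdegh, hh, coeff_C_mul, hf'top, inv_mul_cancel₀ hN]
  have hrootsh : h.roots = (derivative f).roots := roots_C_mul _ hinv
  -- sums over roots of f
  have hSsum : f.roots.sum = -a := by rw [aux_sum_roots f hf n hdeg (by omega)]
  have hSe2 : f.roots.esymm 2 = b := aux_esymm_roots f hf n hdeg hn
  -- sums over roots of h
  have hhsum : h.roots.sum = -((n:ℂ)⁻¹ * ((n:ℂ)-1) * a) := by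
    rw [aux_sum_roots h hmonic (n-1) hdegh (by omega), hh, coeff_C_mul,
      show n-1-1 = n-2 by omega, coeff_derivative, show n - 2 + 1 = n - 1 by omega, ← ha, hc2]
    ring
  have hhe2 : h.roots.esymm 2 = (n:ℂ)⁻¹ * ((n:ℂ)-2) * b := by
    rcases eq_or_lt_of_le hn with h2 | h3
    · have hcard : Multiset.card h.roots < 2 := by
        have := card_roots' h
        omega
      rw [Multiset.esymm, Multiset.powersetCard_eq_empty 2 hcard]
      rw [← h2]
      norm_num
    · rw [aux_esymm_roots h hmonic (n-1) hdegh (by omega), hh, coeff_C_mul,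
        show n-1-2 = n-3 by omega, coeff_derivative, show n - 3 + 1 = n - 2 by omega, ← hb]
      rw [show ((n-3 : ℕ) : ℂ) = (n:ℂ) - 3 by rw [Nat.cast_sub (by omega)]; norm_num]
      ring
  -- gcd decomposition
  set d := EuclideanDomain.gcd f (derivative f) with hd
  have hd0 : d ≠ 0 := fun hq => hf0 (EuclideanDomain.gcd_eq_zero_iff.mp hq).1
  have hdvd : d ∣ derivative f := EuclideanDomain.gcd_dvd_right _ _
  have hmul : d * (derivative f / d) = derivative f := EuclideanDomain.mul_div_cancel' hd0 hdvd
  have hrootsplit : (derivative f).roots = d.roots + (derivative f / d).roots := by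
    conv_lhs => rw [← hmul]
    exact roots_mul (by rw [hmul]; exact hf'0)
  have hrootsd : d.roots = f.roots - f.roots.dedup := aux_roots_gcd f hf0 hf'0
  -- abbreviations
  have H1 : ((derivative f).roots.map (fun x => x ^ 2)).sum =
      ((n:ℂ)⁻¹*((n:ℂ)-1)*a)^2 - 2*((n:ℂ)⁻¹*((n:ℂ)-2)*b) := by
    rw [← hrootsh, aux_sum_sq, hhsum, hhe2]
    ring
  have H2 : (f.roots.map (fun x => x ^ 2)).sum = a^2 - 2*b := by
    rw [aux_sum_sq, hSsum, hSe2]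
    ring
  have H3 : ((derivative f).roots.map (fun x => x ^ 2)).sum =
      (d.roots.map (fun x => x ^ 2)).sum +
      ((derivative f / d).roots.map (fun x => x ^ 2)).sum := by
    rw [hrootsplit, Multiset.map_add, Multiset.sum_add]
  have hsplit2 : f.roots = f.roots.dedup + (f.roots - f.roots.dedup) := by
    rw [add_comm, tsub_add_cancel_of_le (Multiset.dedup_le _)]
  have hB : (d.roots.map (fun x => x ^ 2)).sum =
      (f.roots.map (fun x => x ^ 2)).sum - (f.roots.dedup.map (fun x => x ^ 2)).sum := by
    rw [hrootsd]
    have hx : (Multiset.map (fun x => x ^ 2) f.roots).sum =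
        (Multiset.map (fun x => x ^ 2) f.roots.dedup).sum +
        (Multiset.map (fun x => x ^ 2) (f.roots - f.roots.dedup)).sum := by
      conv_lhs => rw [hsplit2]
      rw [Multiset.map_add, Multiset.sum_add]
    linear_combination -hx
  have hfin : ∑ x ∈ f.roots.toFinset, x ^ 2 = (f.roots.dedup.map (fun x => x ^ 2)).sum := by
    rw [Finset.sum, Multiset.toFinset_val]
  rw [hfin]
  have hgs : ((derivative f / d).roots.map (fun x => x ^ 2)).sum =
      ((derivative f).roots.map (fun x => x ^ 2)).sum -
      (f.roots.map (fun x => x ^ 2)).sum + (f.roots.dedup.map (fun x => x ^ 2)).sum := by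
    linear_combination -H3 - hB
  rw [hgs, H1, H2]
  field_simp
  ring_nf
  linear_combination ((1-2*(n:ℂ))*(a - (n:ℂ)*z₁) - 4*(n:ℂ)*((n:ℂ)-1)*z₂) * eq1 + 2*(n:ℂ) * eq2
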